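/- Let ℒ : ℝ^d → ℝ be differentiable with finite infimum ℒ*, satisfying the PL inequality with constant δ > 0. Let L > 0, ζ ≥ 1, let w ∈ ℝ^d, η > 0, and let G be a square-integrable random vector such that the zeroth-order descent bound E[ℒ(w − ηG)] ≤ ℒ(w) − η‖∇ℒ(w)‖² + (Lζη²/2)·E[‖G‖²] holds, and E[‖G‖²] ≤ c_g(1 + c_h)‖∇ℒ(w)‖² + (2ασ_g²/(KB))·(ℒ(w) − ℒ*) + c_g σ_h² with c_g, c_h, α, σ_g, σ_h ≥ 0 and K, B ≥ 1. Then for 0 < η ≤ 2/(L ζ c_g (1 + c_h)), E[ℒ(w − ηG)] − ℒ* ≤ (1 − A₂)(ℒ(w) − ℒ*) + C₂, where A₂ = 2δη − Lζδη²c_g(1 + c_h) − Lζασ_g²η²/(KB) and C₂ = L ζ c_g σ_h² η²/2. (One-step contraction for ZO-FedSGD.) -/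

import Mathlib

open MeasureTheory RealInnerProductSpace

/-- **One-step contraction for ZO-FedSGD.** Taking the dimension-free zeroth-order descent
bound (with low-effective-rank factor `ζ`) and the combined second-moment bound as
hypotheses, the update `w - η G` contracts the optimality gap:
`E[ℒ(w - η G)] - ℒ* ≤ (1 - A₂) (ℒ(w) - ℒ*) + C₂`. -/
theorem stmt_3 {d : ℕ} (ℒ : EuclideanSpace ℝ (Fin d) → ℝ) (Lstar δ L ζ : ℝ)
    (hdiff : Differentiable ℝ ℒ)
    (hinf : IsGLB (Set.range ℒ) Lstar)
    (hδ : 0 < δ)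
    (hPL : ∀ v : EuclideanSpace ℝ (Fin d), ‖gradient ℒ v‖ ^ 2 ≥ 2 * δ * (ℒ v - Lstar))
    (hL : 0 < L) (hζ : 1 ≤ ζ)
    (w : EuclideanSpace ℝ (Fin d)) (η : ℝ) (hη0 : 0 < η)
    (c_g c_h α σ_g σ_h : ℝ) (hcg : 0 ≤ c_g) (hch : 0 ≤ c_h) (hα : 0 ≤ α)
    (hσg : 0 ≤ σ_g) (hσh : 0 ≤ σ_h)
    (K B : ℕ) (hK : 1 ≤ K) (hB : 1 ≤ B)
    {Ω : Type*} [MeasurableSpace Ω] (P : Measure Ω) [IsProbabilityMeasure P]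
    (G : Ω → EuclideanSpace ℝ (Fin d)) (hG2 : MemLp G 2 P)
    (hdescent : ∫ ω, ℒ (w - η • G ω) ∂P ≤
      ℒ w - η * ‖gradient ℒ w‖ ^ 2 + L * ζ * η ^ 2 / 2 * ∫ ω, ‖G ω‖ ^ 2 ∂P)
    (hsecond : ∫ ω, ‖G ω‖ ^ 2 ∂P ≤
      c_g * (1 + c_h) * ‖gradient ℒ w‖ ^ 2
        + (2 * α * σ_g ^ 2 / (K * B)) * (ℒ w - Lstar) + c_g * σ_h ^ 2)
    (hη : η ≤ 2 / (L * ζ * c_g * (1 + c_h))) :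
    (∫ ω, ℒ (w - η • G ω) ∂P) - Lstar ≤
      (1 - (2 * δ * η - L * ζ * δ * η ^ 2 * c_g * (1 + c_h)
            - L * ζ * α * σ_g ^ 2 * η ^ 2 / (K * B)))
          * (ℒ w - Lstar)
        + L * ζ * c_g * σ_h ^ 2 * η ^ 2 / 2 := by

  have hch1 : (0:ℝ) < 1 + c_h := by linarith
  have hcg' : 0 < c_g := by
    rcases lt_or_eq_of_le hcg with h | h
    · exact h
    · exfalso
      rw [← h] at hη
      simp at hη
      linarith
  have hK1 : (1:ℝ) ≤ (K : ℝ) := by exact_mod_cast hK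
  have hB1 : (1:ℝ) ≤ (B : ℝ) := by exact_mod_cast hB
  have hKB : (0:ℝ) < (K : ℝ) * B := by nlinarith
  have hΔ : 0 ≤ ℒ w - Lstar := by
    have := hinf.1 (Set.mem_range_self w)
    linarith
  have h4 : L * ζ * η * c_g * (1 + c_h) ≤ 2 := by
    have hden : 0 < L * ζ * c_g * (1 + c_h) := by positivity
    rw [le_div_iff₀ hden] at hη
    nlinarith
  have hg2nn : 0 ≤ ‖gradient ℒ w‖ ^ 2 := by positivity
  have hPLw := hPL w
  have hcoef : (0:ℝ) ≤ L * ζ * η ^ 2 / 2 := by positivity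
  have step : ∫ ω, ℒ (w - η • G ω) ∂P ≤
      ℒ w - η * ‖gradient ℒ w‖ ^ 2 + L * ζ * η ^ 2 / 2 *
        (c_g * (1 + c_h) * ‖gradient ℒ w‖ ^ 2
          + (2 * α * σ_g ^ 2 / (K * B)) * (ℒ w - Lstar) + c_g * σ_h ^ 2) := by
    have := mul_le_mul_of_nonneg_left hsecond hcoef
    linarith
  have hc : 0 ≤ η - L * ζ * η ^ 2 * c_g * (1 + c_h) / 2 := by nlinarith
  have hpl2 : (η - L * ζ * η ^ 2 * c_g * (1 + c_h) / 2) * (2 * δ * (ℒ w - Lstar)) ≤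
      (η - L * ζ * η ^ 2 * c_g * (1 + c_h) / 2) * ‖gradient ℒ w‖ ^ 2 :=
    mul_le_mul_of_nonneg_left hPLw hc
  have ht : L * ζ * α * σ_g ^ 2 * η ^ 2 / ((K:ℝ) * B)
      = L * ζ * η ^ 2 / 2 * (2 * α * σ_g ^ 2 / ((K:ℝ) * B)) := by
    field_simp
  rw [ht]
  linarith [step, hpl2]
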